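/- Let E be a complex Banach space, c ∈ ℂ, 0 < R, n ∈ ℕ, and a₁, …, a_n ∈ E. Let f be holomorphic on the punctured disc {z : 0 < |z − c| < R} and suppose that z ↦ f(z) − Σ_{k=1}^n a_k (z − c)^{−k} extends to a holomorphic function on the full disc B(c,R). Then for every r with 0 < r < R and every σ ∈ ℂ with |σ − c| > r, (i/(2π)) ∮_{|ζ−c|=r} f(ζ)/(ζ − σ) dζ = Σ_{k=1}^n a_k (σ − c)^{−k}. -/

import Mathlib

open Metric Set Complex

noncomputable section

/-- A principal part at `c ∈ ℂ` with values in a complex vector space `E`: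
`φ(σ) = ∑_{k=1}^m a_k (σ - c)^{-k}` (with the convention that the value at the pole is `0`,
coming from `0⁻¹ = 0` in Lean; for `σ ≠ c` this is exactly the usual formula). -/
def IsPrincipalPart {E : Type*} [AddCommGroup E] [Module ℂ E] (c : ℂ) (φ : ℂ → E) : Prop :=
  ∃ (m : ℕ) (a : ℕ → E), ∀ σ : ℂ, φ σ = ∑ k ∈ Finset.Icc 1 m, ((σ - c) ^ (-(k : ℤ))) • a k

/-- A singular function with poles in `S ⊆ ℂ`: a finite sum of principal parts at
finitely many points of `S`. -/
def IsSingularFunction {E : Type*} [AddCommGroup E] [Module ℂ E] (S : Set ℂ) (φ : ℂ → E) :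
    Prop :=
  ∃ (F : Finset ℂ) (p : ℂ → ℂ → E), (↑F : Set ℂ) ⊆ S ∧ (∀ c ∈ F, IsPrincipalPart c (p c)) ∧
    ∀ σ : ℂ, φ σ = ∑ c ∈ F, p c σ

/-- The space `𝒦` of singular functions `φ` with poles in `Ω` such that `σ ↦ P σ (φ σ)`
agrees, off a finite set (the poles of `φ`), with a function holomorphic on all of `Ω`. -/
def kernelSpace {𝒟 H : Type*} [NormedAddCommGroup 𝒟] [NormedSpace ℂ 𝒟]
    [NormedAddCommGroup H] [NormedSpace ℂ H]
    (Ω : Set ℂ) (P : ℂ → (𝒟 →L[ℂ] H)) : Set (ℂ → 𝒟) :=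
  {φ | IsSingularFunction Ω φ ∧ ∃ g : ℂ → H, DifferentiableOn ℂ g Ω ∧
    ∃ F : Set ℂ, F.Finite ∧ ∀ σ ∈ Ω \ F, P σ (φ σ) = g σ}

/-- The local kernel space `𝔎(𝔓, S)` of a holomorphic family of `n × n` matrices on `D`:
singular functions `φ : ℂ → ℂⁿ` with poles in `S` such that `σ ↦ 𝔓(σ) · φ(σ)` agrees,
off a finite set (the poles of `φ`), with a function holomorphic on all of `D`. -/
def matKernelSpace {n : ℕ} (D : Set ℂ) (P : ℂ → Matrix (Fin n) (Fin n) ℂ) (S : Set ℂ) :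
    Set (ℂ → (Fin n → ℂ)) :=
  {φ | IsSingularFunction S φ ∧ ∃ g : ℂ → (Fin n → ℂ),
    (∀ i, DifferentiableOn ℂ (fun σ => g σ i) D) ∧
    ∃ F : Set ℂ, F.Finite ∧ ∀ σ ∈ D \ F, (P σ).mulVec (φ σ) = g σ}

/-- A subset `K` of a complex vector space (in practice a linear subspace) has a basis of
cardinality `d`: there are `d` elements of `K` that are linearly independent and span `K`. -/
def HasBasisOfCard {E : Type*} [AddCommGroup E] [Module ℂ E] (K : Set E) (d : ℕ) : Prop :=
  ∃ φ : Fin d → E, (∀ i, φ i ∈ K) ∧ LinearIndependent ℂ φ ∧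
    ∀ ψ ∈ K, ψ ∈ Submodule.span ℂ (Set.range φ)

/-- A bounded operator is Fredholm of index `0`: finite-dimensional kernel, closed range,
finite-dimensional cokernel, and `dim ker = dim coker`. -/
def FredholmIndexZero {𝒟 H : Type*} [NormedAddCommGroup 𝒟] [NormedSpace ℂ 𝒟]
    [NormedAddCommGroup H] [NormedSpace ℂ H] (T : 𝒟 →L[ℂ] H) : Prop :=
  FiniteDimensional ℂ (LinearMap.ker (T : 𝒟 →ₗ[ℂ] H)) ∧ IsClosed (LinearMap.range (T : 𝒟 →ₗ[ℂ] H) : Set H) ∧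
    FiniteDimensional ℂ (H ⧸ LinearMap.range (T : 𝒟 →ₗ[ℂ] H)) ∧
    Module.finrank ℂ (LinearMap.ker (T : 𝒟 →ₗ[ℂ] H)) = Module.finrank ℂ (H ⧸ LinearMap.range (T : 𝒟 →ₗ[ℂ] H))


open MeasureTheory in
lemma myCircleIntegral_finset_sum {E : Type*} [NormedAddCommGroup E] [NormedSpace ℂ E]
    {ι : Type*} (s : Finset ι) (f : ι → ℂ → E) {c : ℂ} {r : ℝ}
    (hf : ∀ i ∈ s, CircleIntegrable (f i) c r) :
    (∮ z in C(c, r), ∑ i ∈ s, f i z) = ∑ i ∈ s, ∮ z in C(c, r), f i z := by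
  simp only [circleIntegral, Finset.smul_sum]
  exact intervalIntegral.integral_finset_sum fun i hi => (hf i hi).out

lemma sphere_ne_center' {c : ℂ} {r : ℝ} (hr : 0 < r) {ζ : ℂ} (hζ : ζ ∈ sphere c r) : ζ ≠ c := by
  intro h; rw [mem_sphere, h, dist_self] at hζ; exact hr.ne' hζ.symm

lemma sphere_ne_outer {c σ : ℂ} {r : ℝ} (hσ : r < dist σ c) {ζ : ℂ} (hζ : ζ ∈ sphere c r) :
    ζ ≠ σ := by
  intro h; rw [mem_sphere] at hζ; rw [← h] at hσ; exact lt_irrefl _ (hζ ▸ hσ)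

lemma circleIntegral_sub_inv_outer {c σ : ℂ} {r : ℝ} (hr : 0 < r) (hσ : r < dist σ c) :
    (∮ ζ in C(c, r), (ζ - σ)⁻¹) = 0 := by
  have hne : ∀ z ∈ closedBall c r, z ≠ σ := by
    intro z hz h
    rw [mem_closedBall, h] at hz
    exact absurd hσ (not_lt.2 hz)
  refine Complex.circleIntegral_eq_zero_of_differentiable_on_off_countable hr.le
    Set.countable_empty ?_ ?_
  · intro z hz
    exact ((continuousAt_id.sub continuousAt_const).inv₀
      (sub_ne_zero.2 (hne z hz))).continuousWithinAt
  · intro z hz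
    exact (differentiableAt_id.sub_const σ).inv
      (sub_ne_zero.2 (hne z (ball_subset_closedBall hz.1)))

lemma key_scalar_integral {c σ : ℂ} {r : ℝ} (hr : 0 < r) (hσ : r < dist σ c) :
    ∀ k : ℕ, (∮ ζ in C(c, r), (ζ - σ)⁻¹ * (ζ - c) ^ (-(k : ℤ))) =
      if k = 0 then 0 else -(2 * Real.pi * Complex.I) * (σ - c) ^ (-(k : ℤ)) := by
  have hcσ : c ≠ σ := by
    intro h; rw [← h, dist_self] at hσ; exact absurd hσ (not_lt.2 hr.le)
  intro k
  induction k with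
  | zero =>
    simp only [Nat.cast_zero, neg_zero, zpow_zero, mul_one, if_pos rfl]
    exact circleIntegral_sub_inv_outer hr hσ
  | succ k ih =>
    have hcongr : (∮ ζ in C(c, r), (ζ - σ)⁻¹ * (ζ - c) ^ (-((k+1 : ℕ) : ℤ))) =
        ∮ ζ in C(c, r), (c - σ)⁻¹ *
          ((ζ - c) ^ (-((k+1 : ℕ) : ℤ)) - (ζ - σ)⁻¹ * (ζ - c) ^ (-(k : ℤ))) := by
      refine circleIntegral.integral_congr hr.le fun ζ hζ => ?_
      have h1 : ζ - c ≠ 0 := sub_ne_zero.2 (sphere_ne_center' hr hζ)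
      have h2 : ζ - σ ≠ 0 := sub_ne_zero.2 (sphere_ne_outer hσ hζ)
      have h3 : c - σ ≠ 0 := sub_ne_zero.2 hcσ
      show (ζ - σ)⁻¹ * (ζ - c) ^ (-((k+1 : ℕ) : ℤ)) = _
      rw [zpow_neg, zpow_neg, zpow_natCast, zpow_natCast]
      have hw : (ζ - σ) - (ζ - c) = c - σ := by ring
      apply mul_left_cancel₀ h3
      rw [mul_inv_cancel_left₀ h3, ← hw, pow_succ, mul_inv]
      have hk : ((ζ - c) ^ k) ≠ 0 := pow_ne_zero _ h1
      field_simp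
    have hint1 : CircleIntegrable (fun ζ : ℂ => (ζ - c) ^ (-((k+1 : ℕ) : ℤ))) c r := by
      rw [circleIntegrable_sub_zpow_iff]
      right; right
      intro h
      rw [mem_sphere, dist_self, abs_of_pos hr] at h
      exact hr.ne' h.symm
    have hint2 : CircleIntegrable (fun ζ : ℂ => (ζ - σ)⁻¹ * (ζ - c) ^ (-(k : ℤ))) c r := by
      refine ContinuousOn.circleIntegrable hr.le ?_
      refine ContinuousOn.mul ?_ ?_
      · exact ContinuousOn.inv₀ (continuousOn_id.sub continuousOn_const)
          fun ζ hζ => sub_ne_zero.2 (sphere_ne_outer hσ hζ)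
      · exact ContinuousOn.zpow₀ (continuousOn_id.sub continuousOn_const) _
          fun ζ hζ => Or.inl (sub_ne_zero.2 (sphere_ne_center' hr hζ))
    rw [hcongr, circleIntegral.integral_const_mul,
      circleIntegral.integral_sub hint1 hint2, ih]
    have h3 : (σ - c) ≠ 0 := sub_ne_zero.2 fun h => hcσ h.symm
    rcases Nat.eq_zero_or_pos k with hk | hk
    · subst hk
      rw [if_neg (by norm_num : ¬(0 + 1 = 0))]
      have hcint : (∮ ζ in C(c, r), (ζ - c) ^ (-((0+1 : ℕ) : ℤ))) = 2 * Real.pi * Complex.I := by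
        rw [← circleIntegral.integral_sub_center_inv c (ne_of_gt hr)]
        refine circleIntegral.integral_congr hr.le fun ζ hζ => ?_
        norm_num
      rw [hcint, if_pos rfl, sub_zero]
      have hcs : c - σ = -(σ - c) := by ring
      rw [hcs, show (-((0+1 : ℕ) : ℤ)) = (-1 : ℤ) by norm_num, zpow_neg, zpow_one]
      field_simp
    · rw [if_neg hk.ne', if_neg (by omega : ¬(k + 1 = 0))]
      have hA : (∮ ζ in C(c, r), (ζ - c) ^ (-((k+1 : ℕ) : ℤ))) = 0 := by
        refine circleIntegral.integral_sub_zpow_of_ne ?_ _ _ _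
        intro h
        have : (k : ℤ) = 0 := by omega
        exact hk.ne' (by exact_mod_cast this)
      rw [hA, zero_sub]
      have hcs : (c - σ)⁻¹ = -(σ - c)⁻¹ := by
        rw [show c - σ = -(σ - c) by ring, inv_neg]
      rw [hcs, zpow_neg, zpow_neg, zpow_natCast, zpow_natCast, pow_succ, mul_inv]
      ring

/-- the Cauchy-type integral `(i/2π) ∮_{|ζ-c|=r} f(ζ)/(ζ-σ) dζ` recovers the
principal part of `f` at `c`, for `|σ - c| > r`. -/
theorem statement14 {E : Type*} [NormedAddCommGroup E] [NormedSpace ℂ E] [CompleteSpace E]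
    (c : ℂ) (R : ℝ) (hR : 0 < R) (n : ℕ) (a : ℕ → E) (f : ℂ → E)
    (hf : DifferentiableOn ℂ f (ball c R \ {c}))
    (hext : ∃ g : ℂ → E, DifferentiableOn ℂ g (ball c R) ∧
      ∀ z ∈ ball c R \ {c},
        g z = f z - ∑ k ∈ Finset.Icc 1 n, ((z - c) ^ (-(k : ℤ))) • a k) :
    ∀ r : ℝ, 0 < r → r < R → ∀ σ : ℂ, r < dist σ c →
      (Complex.I / (2 * (Real.pi : ℂ))) • (∮ ζ in C(c, r), (ζ - σ)⁻¹ • f ζ)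
        = ∑ k ∈ Finset.Icc 1 n, ((σ - c) ^ (-(k : ℤ))) • a k := by
  obtain ⟨g, hg, hgf⟩ := hext
  intro r hr hrR σ hσ
  have hcb : closedBall c r ⊆ ball c R := closedBall_subset_ball hrR
  have hsub : sphere c r ⊆ ball c R \ {c} := by
    intro ζ hζ
    refine ⟨hcb (sphere_subset_closedBall hζ), ?_⟩
    simpa using sphere_ne_center' hr hζ
  have hσc : ∀ z ∈ closedBall c r, z ≠ σ := fun z hz h =>
    absurd hσ (not_lt.2 (h ▸ hz))
  have hgc : ContinuousOn g (closedBall c r) := (hg.continuousOn).mono hcb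
  have hgint0 : (∮ ζ in C(c, r), (ζ - σ)⁻¹ • g ζ) = 0 := by
    refine Complex.circleIntegral_eq_zero_of_differentiable_on_off_countable hr.le
      Set.countable_empty ?_ ?_
    · exact (ContinuousOn.inv₀ (continuousOn_id.sub continuousOn_const)
        fun z hz => sub_ne_zero.2 (hσc z hz)).smul hgc
    · intro z hz
      have h1 : DifferentiableAt ℂ g z :=
        hg.differentiableAt (isOpen_ball.mem_nhds (hcb (ball_subset_closedBall hz.1)))
      exact ((differentiableAt_id.sub_const σ).inv
        (sub_ne_zero.2 (hσc z (ball_subset_closedBall hz.1)))).smul h1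
  have hfeq : Set.EqOn (fun ζ => (ζ - σ)⁻¹ • f ζ)
      (fun ζ => (ζ - σ)⁻¹ • g ζ +
        ∑ k ∈ Finset.Icc 1 n, ((ζ - σ)⁻¹ * (ζ - c) ^ (-(k : ℤ))) • a k) (sphere c r) := by
    intro ζ hζ
    have hge := hgf ζ (hsub hζ)
    have hfζ : f ζ = g ζ + ∑ k ∈ Finset.Icc 1 n, ((ζ - c) ^ (-(k : ℤ))) • a k := by
      rw [hge]; abel
    simp only
    rw [hfζ, smul_add, Finset.smul_sum]
    congr 1
    exact Finset.sum_congr rfl fun k _ =>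
      smul_smul ((ζ - σ)⁻¹) ((ζ - c) ^ (-(k : ℤ))) (a k)
  have hintg : CircleIntegrable (fun ζ => (ζ - σ)⁻¹ • g ζ) c r :=
    ContinuousOn.circleIntegrable hr.le
      ((ContinuousOn.inv₀ (continuousOn_id.sub continuousOn_const)
        fun z hz => sub_ne_zero.2 (hσc z (sphere_subset_closedBall hz))).smul
        (hgc.mono sphere_subset_closedBall))
  have hkcont : ∀ k : ℕ, ContinuousOn
      (fun ζ : ℂ => ((ζ - σ)⁻¹ * (ζ - c) ^ (-(k : ℤ))) • a k) (sphere c r) := by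
    intro k
    refine ContinuousOn.smul ?_ continuousOn_const
    refine ContinuousOn.mul ?_ ?_
    · exact ContinuousOn.inv₀ (continuousOn_id.sub continuousOn_const)
        fun ζ hζ => sub_ne_zero.2 (sphere_ne_outer hσ hζ)
    · exact ContinuousOn.zpow₀ (continuousOn_id.sub continuousOn_const) _
        fun ζ hζ => Or.inl (sub_ne_zero.2 (sphere_ne_center' hr hζ))
  have hintk : ∀ k ∈ Finset.Icc 1 n, CircleIntegrable
      (fun ζ : ℂ => ((ζ - σ)⁻¹ * (ζ - c) ^ (-(k : ℤ))) • a k) c r :=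
    fun k _ => ContinuousOn.circleIntegrable hr.le (hkcont k)
  have hintsum : CircleIntegrable
      (fun ζ : ℂ => ∑ k ∈ Finset.Icc 1 n,
        ((ζ - σ)⁻¹ * (ζ - c) ^ (-(k : ℤ))) • a k) c r := by
    refine ContinuousOn.circleIntegrable hr.le ?_
    exact continuousOn_finset_sum _ fun k _ => hkcont k
  have hadd : (∮ ζ in C(c, r), ((ζ - σ)⁻¹ • g ζ +
      ∑ k ∈ Finset.Icc 1 n, ((ζ - σ)⁻¹ * (ζ - c) ^ (-(k : ℤ))) • a k)) =
      (∮ ζ in C(c, r), (ζ - σ)⁻¹ • g ζ) +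
      ∮ ζ in C(c, r), ∑ k ∈ Finset.Icc 1 n, ((ζ - σ)⁻¹ * (ζ - c) ^ (-(k : ℤ))) • a k := by
    simp only [circleIntegral, smul_add]
    exact intervalIntegral.integral_add hintg.out hintsum.out
  rw [circleIntegral.integral_congr hr.le hfeq, hadd, hgint0, zero_add,
    myCircleIntegral_finset_sum _ _ hintk, Finset.smul_sum]
  refine Finset.sum_congr rfl fun k hk => ?_
  have hk1 : 1 ≤ k := (Finset.mem_Icc.1 hk).1
  rw [circleIntegral.integral_smul_const, key_scalar_integral hr hσ k,
    if_neg (by omega : ¬(k = 0)), smul_smul]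
  congr 1
  have hπ : (Real.pi : ℂ) ≠ 0 := by exact_mod_cast Real.pi_ne_zero
  rw [div_mul_eq_mul_div, ← mul_assoc]
  rw [show Complex.I * -(2 * (Real.pi : ℂ) * Complex.I) =
      -(2 * (Real.pi : ℂ)) * (Complex.I * Complex.I) by ring, Complex.I_mul_I]
  rw [show -(2 * (Real.pi : ℂ)) * -1 = 2 * (Real.pi : ℂ) by ring]
  rw [mul_comm, mul_div_assoc, div_self (by norm_num [hπ] : (2 * (Real.pi : ℂ)) ≠ 0), mul_one]
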